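/- For every k-linear derivation D : K → K with D(x) = 1, one has in K: D( r_i(x)·y / (xⁱ·(x−a)^g) ) = ψ_i(x)/(2·x^{i+1}·y) − [ (ψ_i(x)·t_i(x) − φ_i(x)·r_i(x))·(x−a) − 2i·f(x)·(−1)^{g−i}·(g choose i)·a^{g−i+1}·xⁱ ] / (2·x^{i+1}·(x−a)^{g+1}·y). -/

import Mathlib

open Polynomial

/-- The defining polynomial `Y² − f(X)`, as a polynomial in `Y` over `k[X]`. -/
noncomputable def oddPoly {k : Type} [Field k] (f : k[X]) : Polynomial (Polynomial k) :=
  X ^ 2 - C f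

/-- The affine coordinate ring `k[X][Y]/(Y² − f(X))`. -/
abbrev OddRing {k : Type} [Field k] (f : k[X]) : Type :=
  AdjoinRoot (oddPoly f)

/-- The truncation of a polynomial in degrees `≤ m`. -/
noncomputable def truncLE {k : Type} [Field k] (m : ℕ) (u : k[X]) : k[X] :=
  ∑ j ∈ Finset.range (m + 1), C (u.coeff j) * X ^ j

/-- `s_i(X) := X·f′(X) − 2i·f(X)`. -/
noncomputable def sPoly {k : Type} [Field k] (f : k[X]) (i : ℕ) : k[X] :=
  X * derivative f - C ((2 * i : ℕ) : k) * f

/-- `ψ_i(X)`, the truncation of `s_i` in degrees `≤ i`. -/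
noncomputable def psiPoly {k : Type} [Field k] (f : k[X]) (i : ℕ) : k[X] :=
  truncLE i (sPoly f i)

/-- `φ_i(X) := s_i(X) − ψ_i(X)`. -/
noncomputable def phiPoly {k : Type} [Field k] (f : k[X]) (i : ℕ) : k[X] :=
  sPoly f i - psiPoly f i

/-- `r_i(X)`, the truncation of `(X − a)^g` in degrees `≤ i − 1`. -/
noncomputable def truncR {k : Type} [Field k] (g : ℕ) (a : k) (i : ℕ) : k[X] :=
  ∑ j ∈ Finset.range i, C (((X - C a) ^ g).coeff j) * X ^ j

/-- `t_i(X) := (X − a)^g − r_i(X)`. -/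
noncomputable def truncT {k : Type} [Field k] (g : ℕ) (a : k) (i : ℕ) : k[X] :=
  (X - C a) ^ g - truncR g a i

lemma coeff_X_mul_derivative {k : Type} [Field k] (p : k[X]) (n : ℕ) :
    (X * derivative p).coeff n = p.coeff n * n := by
  cases n with
  | zero => simp
  | succ m => rw [coeff_X_mul, coeff_derivative]; push_cast; ring

lemma truncR_coeff {k : Type} [Field k] (g : ℕ) (a : k) (i n : ℕ) :
    (truncR g a i).coeff n = if n < i then ((X - C a) ^ g).coeff n else 0 := by
  rw [truncR, finset_sum_coeff]
  simp only [coeff_C_mul, coeff_X_pow, mul_ite, mul_one, mul_zero]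
  simp [Finset.sum_ite_eq, Finset.mem_range]

lemma key_trunc {k : Type} [Field k] (g : ℕ) (a : k) (i : ℕ) (hi1 : 1 ≤ i) (hig : i ≤ g) :
    (X - C a) * derivative (truncR g a i) - C (g : k) * truncR g a i =
      C ((i : k) * (-1) ^ (g - i) * (g.choose i : k) * a ^ (g - i + 1)) * X ^ (i - 1) := by
  set P : k[X] := (X - C a) ^ g with hP
  have hc : ∀ n, P.coeff n = (-a) ^ (g - n) * (g.choose n : k) := by
    intro n
    rw [hP, show (X - C a) = X + C (-a) by simp [sub_eq_add_neg], coeff_X_add_C_pow]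
  have hmain : (X - C a) * derivative P = C (g : k) * P := by
    rw [hP, derivative_pow]
    simp only [derivative_sub, derivative_X, derivative_C, sub_zero, mul_one]
    rw [show (X - C a) * (C (g:k) * (X - C a) ^ (g-1)) = C (g:k) * ((X - C a) ^ (g-1) * (X - C a)) by ring,
      ← pow_succ, Nat.sub_add_cancel (le_trans hi1 hig)]
  have hmaster : ∀ n : ℕ, P.coeff n * n - a * (P.coeff (n+1) * (n+1)) = (g : k) * P.coeff n := by
    intro n
    have h := congrArg (fun p : k[X] => p.coeff n) hmain
    simp only [sub_mul, coeff_sub, coeff_C_mul] at h ⊢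
    rwa [coeff_X_mul_derivative, coeff_derivative] at h
  ext n
  rw [coeff_sub, sub_mul, coeff_sub, coeff_X_mul_derivative, coeff_C_mul, coeff_derivative,
    coeff_C_mul, coeff_C_mul, coeff_X_pow]
  simp only [truncR_coeff]
  rcases lt_trichotomy (n+1) i with hn | hn | hn
  · have h1 : n < i := lt_of_le_of_lt (Nat.le_succ n) hn
    have h2 : ¬ (n = i - 1) := by omega
    simp only [if_pos hn, if_pos h1, if_neg h2, mul_zero]
    linear_combination hmaster n
  · have h1 : n < i := by omega
    have h2 : n = i - 1 := by omega
    have h3 : ¬ (n + 1 < i) := by omega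
    simp only [if_pos h1, if_neg h3, if_pos h2, zero_mul, mul_zero, mul_one]
    have hm := hmaster n
    rw [hc (n+1)] at hm
    have hni : n + 1 = i := hn
    have hneg : (-a : k) ^ (g - i) = (-1)^(g-i) * a^(g-i) := by
      rw [neg_pow]
    rw [hni, hneg] at hm
    rw [← hP]
    have hcast2 : ((n:k) + 1) = (i : k) := by exact_mod_cast congrArg (Nat.cast : ℕ → k) hni
    linear_combination hm + (-1:k)^(g-i) * a^(g-i) * (g.choose i : k) * a * hcast2
  · have h1 : ¬ (n < i) := by omega
    have h3 : ¬ (n + 1 < i) := by omega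
    have h2 : ¬ (n = i - 1) := by omega
    simp [if_neg h1, if_neg h3, if_neg h2]


/-- With `K` the fraction field of `k[X][Y]/(Y² − f(X))` (`char k ≠ 2`,
`f` nonconstant squarefree), `g ≥ 2`, `a ∈ k`, `1 ≤ i ≤ g`, and `D : K → K` any `k`-linear
derivation with `D x = 1`, one has
`D(r_i(x)·y/(xⁱ·(x−a)^g)) = ψ_i(x)/(2x^{i+1}y) −
 [(ψ_i(x)t_i(x) − φ_i(x)r_i(x))(x−a) − 2i·f(x)·(−1)^{g−i}·(g choose i)·a^{g−i+1}·xⁱ]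
   / (2x^{i+1}(x−a)^{g+1}y)`. -/
theorem statement6 {k : Type} [Field k] (hk2 : ringChar k ≠ 2)
    (f : k[X]) (hf0 : f.natDegree ≠ 0) (hsqf : Squarefree f)
    (K : Type) [Field K] [Algebra k K] [Algebra (OddRing f) K]
    [IsScalarTower k (OddRing f) K] [IsFractionRing (OddRing f) K]
    (x y : K)
    (hx : x = algebraMap (OddRing f) K (AdjoinRoot.of (oddPoly f) X))
    (hy : y = algebraMap (OddRing f) K (AdjoinRoot.root (oddPoly f)))
    (g : ℕ) (hg : 2 ≤ g) (a : k) (i : ℕ) (hi1 : 1 ≤ i) (hig : i ≤ g)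
    (D : Derivation k K K) (hD : D x = 1) :
    D (aeval x (truncR g a i) * y / (x ^ i * (x - algebraMap k K a) ^ g)) =
      aeval x (psiPoly f i) / (2 * x ^ (i + 1) * y) -
        ((aeval x (psiPoly f i) * aeval x (truncT g a i) -
            aeval x (phiPoly f i) * aeval x (truncR g a i)) * (x - algebraMap k K a) -
          2 * (i : K) * aeval x f * (-1 : K) ^ (g - i) * (g.choose i : K) *
            algebraMap k K a ^ (g - i + 1) * x ^ i) /
        (2 * x ^ (i + 1) * (x - algebraMap k K a) ^ (g + 1) * y) := by
  have hA : Function.Injective (algebraMap (OddRing f) K) := IsFractionRing.injective _ _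
  have hdeg : (oddPoly f).degree ≠ 0 := by
    rw [oddPoly, degree_X_pow_sub_C (by norm_num : 0 < 2)]
    decide
  have hof := AdjoinRoot.of.injective_of_degree_ne_zero hdeg
  have hC : ∀ c : k, algebraMap (OddRing f) K ((AdjoinRoot.of (oddPoly f)) (Polynomial.C c))
      = algebraMap k K c := by
    intro c
    rw [IsScalarTower.algebraMap_apply k (OddRing f) K]
    congr 1
  have hρ : ∀ u : k[X], algebraMap (OddRing f) K (AdjoinRoot.of (oddPoly f) u) = aeval x u := by
    intro u
    induction u using Polynomial.induction_on' with
    | add p q hp hq => rw [map_add, map_add, hp, hq, map_add]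
    | monomial n c =>
      rw [← C_mul_X_pow_eq_monomial]
      simp only [map_mul, map_pow, hC, aeval_C, aeval_X, ← hx]
  have hne : ∀ u : k[X], u ≠ 0 → aeval x u ≠ 0 := by
    intro u hu h0
    apply hu
    apply hof
    apply hA
    rw [hρ u, h0, map_zero, map_zero]
  have hx0 : x ≠ 0 := by
    have := hne X X_ne_zero; rwa [aeval_X] at this
  have hxb : x - algebraMap k K a ≠ 0 := by
    have := hne (X - C a) (X_sub_C_ne_zero a)
    rwa [map_sub, aeval_X, aeval_C] at this
  have hfne : f ≠ 0 := fun h => hf0 (by rw [h, natDegree_zero])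
  have hF0 : aeval x f ≠ 0 := hne f hfne
  have hroot : AdjoinRoot.root (oddPoly f) ^ 2 = AdjoinRoot.of (oddPoly f) f := by
    have h := AdjoinRoot.eval₂_root (oddPoly f)
    rw [oddPoly] at h
    simp only [eval₂_sub, eval₂_pow, eval₂_X, eval₂_C, sub_eq_zero] at h
    exact h
  have hy2 : y * y = aeval x f := by
    calc y * y = algebraMap (OddRing f) K (AdjoinRoot.root (oddPoly f) ^ 2) := by
          rw [hy, map_pow]; ring
    _ = aeval x f := by rw [hroot, hρ]
  have hy0 : y ≠ 0 := fun h => hF0 (by rw [← hy2, h, mul_zero])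
  have h2K : (2:K) ≠ 0 := by
    have h2k : (2:k) ≠ 0 := Ring.two_ne_zero hk2
    have h2 : (2:K) = algebraMap k K 2 := by rw [map_ofNat]
    rw [h2]
    intro h
    exact h2k ((algebraMap k K).injective (by rw [h, map_zero]))
  have hDa : ∀ u : k[X], D (aeval x u) = aeval x (derivative u) := by
    intro u; rw [Derivation.map_aeval, hD, smul_eq_mul, mul_one]
  have hDb : D (algebraMap k K a) = 0 := Derivation.map_algebraMap D a
  have hDy : D y = aeval x (derivative f) / (2 * y) := by
    have h := hDa f
    rw [← hy2, Derivation.leibniz] at h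
    simp only [smul_eq_mul] at h
    field_simp
    linear_combination h
  obtain ⟨i, rfl⟩ : ∃ j, i = j + 1 := ⟨i-1, by omega⟩
  obtain ⟨g, rfl⟩ : ∃ j, g = j + 1 := ⟨g-1, by omega⟩
  have hkey := congrArg (aeval x : k[X] → K) (key_trunc (g+1) a (i+1) (by omega) (by omega))
  simp only [map_sub, map_mul, map_pow, aeval_X, aeval_C, map_natCast, map_neg, map_one,
    Nat.add_sub_cancel] at hkey
  push_cast at hkey
  have hDv : D (x ^ (i+1) * (x - algebraMap k K a) ^ (g+1)) =
      ((i:K)+1) * x^i * (x - algebraMap k K a)^(g+1)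
        + ((g:K)+1) * (x - algebraMap k K a)^g * x^(i+1) := by
    rw [Derivation.leibniz, Derivation.leibniz_pow, Derivation.leibniz_pow, map_sub, hD, hDb]
    simp only [smul_eq_mul, nsmul_eq_mul, Nat.add_sub_cancel, sub_zero, mul_one]
    push_cast; ring
  have hDu : D (aeval x (truncR (g+1) a (i+1)) * y) =
      aeval x (truncR (g+1) a (i+1)) * (aeval x (derivative f) / (2*y))
        + y * aeval x (derivative (truncR (g+1) a (i+1))) := by
    rw [Derivation.leibniz, hDa, hDy]; simp only [smul_eq_mul]
  rw [Derivation.leibniz_div, hDu, hDv]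
  simp only [smul_eq_mul]
  have hT : aeval x (truncT (g+1) a (i+1)) =
      (x - algebraMap k K a)^(g+1) - aeval x (truncR (g+1) a (i+1)) := by
    rw [truncT, map_sub, map_pow, map_sub, aeval_X, aeval_C]
  have hPhi : aeval x (phiPoly f (i+1)) =
      x * aeval x (derivative f) - (2*((i:K)+1)) * aeval x f - aeval x (psiPoly f (i+1)) := by
    rw [phiPoly, map_sub, sPoly, map_sub, map_mul, map_mul, aeval_X, aeval_C, map_natCast]
    push_cast
    ring
  rw [hT, hPhi]
  have hgi : g + 1 - (i + 1) = g - i := by omega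
  rw [hgi]
  set R := aeval x (truncR (g+1) a (i+1)) with hR
  set R' := aeval x (derivative (truncR (g+1) a (i+1))) with hR'
  set F := aeval x f with hF
  set F' := aeval x (derivative f) with hF'
  set Ψ := aeval x (psiPoly f (i+1)) with hΨ
  set b := algebraMap k K a with hb
  have hxp : ∀ n : ℕ, x ^ n ≠ 0 := fun n => pow_ne_zero n hx0
  have hxbp : ∀ n : ℕ, (x - b) ^ n ≠ 0 := fun n => pow_ne_zero n hxb
  have hv2 : (x ^ (i+1) * (x - b) ^ (g+1)) ^ 2 ≠ 0 :=
    pow_ne_zero 2 (mul_ne_zero (hxp _) (hxbp _))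
  have hden1 : 2 * x ^ (i+1+1) * y ≠ 0 :=
    mul_ne_zero (mul_ne_zero h2K (hxp _)) hy0
  have hden2 : 2 * x ^ (i+1+1) * (x - b) ^ (g+1+1) * y ≠ 0 :=
    mul_ne_zero (mul_ne_zero (mul_ne_zero h2K (hxp _)) (hxbp _)) hy0
  have hR'e : R' = ((g+1)*R + ((i:K)+1) * (-1) ^ (g - i) * (((g + 1).choose (i + 1) : ℕ) : K)
      * b ^ (g - i + 1) * x ^ i) / (x - b) := by
    rw [eq_div_iff hxb]; linear_combination hkey
  rw [hR'e, ← hy2]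
  simp only [smul_eq_mul, inv_pow, inv_mul_eq_div]
  rw [div_sub_div _ _ hden1 hden2, div_eq_div_iff hv2 (mul_ne_zero hden1 hden2)]
  field_simp
  push_cast
  ring
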